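/- Let P₀ be an N×N real symmetric positive-definite matrix, let C' be an m×N real matrix such that C' P₀ C'ᵀ is invertible, let d ∈ ℝᵐ and w₀ ∈ ℝᴺ. Define w° = w₀ + P₀ C'ᵀ (C' P₀ C'ᵀ)⁻¹ (d − C' w₀). Then C' w° = d, and for every w ∈ ℝᴺ with C' w = d one has (w − w₀)ᵀ P₀⁻¹ (w − w₀) ≥ (w° − w₀)ᵀ P₀⁻¹ (w° − w₀), with equality if and only if w = w°. -/

import Mathlib

open Matrix

/-- minimum weighted-norm solution of a linear constraint. -/
theorem stmt0 {N m : ℕ} (P₀ : Matrix (Fin N) (Fin N) ℝ) (hP : P₀.PosDef)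
    (C : Matrix (Fin m) (Fin N) ℝ) (hC : IsUnit (C * P₀ * Cᵀ))
    (d : Fin m → ℝ) (w₀ : Fin N → ℝ) (wo : Fin N → ℝ)
    (hwo : wo = w₀ + (P₀ * Cᵀ * (C * P₀ * Cᵀ)⁻¹) *ᵥ (d - C *ᵥ w₀)) :
    C *ᵥ wo = d ∧
    ∀ w : Fin N → ℝ, C *ᵥ w = d →
      (wo - w₀) ⬝ᵥ (P₀⁻¹ *ᵥ (wo - w₀)) ≤ (w - w₀) ⬝ᵥ (P₀⁻¹ *ᵥ (w - w₀)) ∧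
      ((w - w₀) ⬝ᵥ (P₀⁻¹ *ᵥ (w - w₀)) = (wo - w₀) ⬝ᵥ (P₀⁻¹ *ᵥ (wo - w₀)) ↔ w = wo) := by
  have hPinv : P₀⁻¹.PosDef := hP.inv
  have hPu : IsUnit P₀.det := isUnit_iff_ne_zero.mpr hP.det_pos.ne'
  have hSu : IsUnit (C * P₀ * Cᵀ).det := (Matrix.isUnit_iff_isUnit_det _).mp hC
  set K := (C * P₀ * Cᵀ)⁻¹ with hK
  have hSK : (C * P₀ * Cᵀ) * K = 1 := Matrix.mul_nonsing_inv _ hSu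
  set r := d - C *ᵥ w₀ with hr
  set u := wo - w₀ with hu
  have hu' : u = (P₀ * Cᵀ * K) *ᵥ r := by rw [hu, hwo]; abel
  -- C u = r
  have hCu : C *ᵥ u = r := by
    rw [hu', Matrix.mulVec_mulVec, ← Matrix.mul_assoc, ← Matrix.mul_assoc,
      show C * P₀ * Cᵀ * K = 1 from hSK, Matrix.one_mulVec]
  have hCwo : C *ᵥ wo = d := by
    have : C *ᵥ wo - C *ᵥ w₀ = d - C *ᵥ w₀ := by
      rw [← Matrix.mulVec_sub, ← hu, hCu, hr]
    have := congrArg (· + C *ᵥ w₀) this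
    simpa [sub_add_cancel] using this
  -- P₀⁻¹ *ᵥ u = Cᵀ *ᵥ (K *ᵥ r)
  have hPinvu : P₀⁻¹ *ᵥ u = (Cᵀ * K) *ᵥ r := by
    rw [hu', Matrix.mulVec_mulVec, ← Matrix.mul_assoc, ← Matrix.mul_assoc,
      Matrix.nonsing_inv_mul _ hPu, Matrix.one_mul]
  refine ⟨hCwo, fun w hw => ?_⟩
  set e := w - wo with he
  have hCe : C *ᵥ e = 0 := by rw [he, Matrix.mulVec_sub, hw, hCwo, sub_self]
  have hwu : w - w₀ = e + u := by rw [he, hu]; abel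
  -- cross term zero
  have hcross : e ⬝ᵥ (P₀⁻¹ *ᵥ u) = 0 := by
    rw [hPinvu, Matrix.dotProduct_mulVec, ← Matrix.mulVec_transpose,
      Matrix.transpose_mul, Matrix.transpose_transpose, ← Matrix.mulVec_mulVec,
      hCe, Matrix.mulVec_zero, zero_dotProduct]
  have hsym : (P₀⁻¹)ᵀ = P₀⁻¹ := by exact (by simpa using hPinv.1 : P₀⁻¹.IsSymm).eq
  have hcross' : u ⬝ᵥ (P₀⁻¹ *ᵥ e) = 0 := by
    rw [Matrix.dotProduct_mulVec, ← Matrix.mulVec_transpose, hsym, dotProduct_comm]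
    exact hcross
  have hexpand : (w - w₀) ⬝ᵥ (P₀⁻¹ *ᵥ (w - w₀))
      = e ⬝ᵥ (P₀⁻¹ *ᵥ e) + u ⬝ᵥ (P₀⁻¹ *ᵥ u) := by
    rw [hwu, Matrix.mulVec_add, add_dotProduct, dotProduct_add,
      dotProduct_add, hcross, hcross']
    ring
  have hQe : 0 ≤ e ⬝ᵥ (P₀⁻¹ *ᵥ e) := by
    simpa using hPinv.posSemidef.dotProduct_mulVec_nonneg e
  constructor
  · rw [hexpand]; linarith
  · constructor
    · intro h
      have hze : e ⬝ᵥ (P₀⁻¹ *ᵥ e) = 0 := by rw [hexpand] at h; linarith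
      have : e = 0 := by
        by_contra hne
        have := hPinv.dotProduct_mulVec_pos hne
        simp only [star_trivial] at this
        linarith
      have : w - wo = 0 := by rw [← he]; exact this
      exact sub_eq_zero.mp this
    · intro h; rw [h]
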